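/- arXiv:solv-int/9909006 — 2 statements merged into one kernel-verified Lean document; each statement's English description precedes it below -/
import Mathlib

section
/- Let H, L(λ,μ) and L₋ be the Hamiltonian and Lax matrices of the periodic three-particle Toda lattice, let b ∈ ℝ, and assume a_1 ≠ 0. Define the transformed Hamiltonian H̃ = e^{q_2−q_1}(H + b), the transformed Lax matrices L̃ = L − (H̃/a_1)E_{21} and L̃₋ = e^{q_2−q_1}·L₋. Then the transformed Lax equation {H̃, L̃} = [L̃, L̃₋] holds entrywise at every point of ℝ³ × ℝ³, for all λ ∈ ℝ and all μ ≠ 0. -/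
open Real Matrix

/-- The canonical Poisson bracket on the phase space `(Fin 3 → ℝ) × (Fin 3 → ℝ)`
with coordinates `(p, q)`. -/
noncomputable def pbracket (f g : (Fin 3 → ℝ) × (Fin 3 → ℝ) → ℝ)
    (z : (Fin 3 → ℝ) × (Fin 3 → ℝ)) : ℝ :=
  ∑ i : Fin 3,
    (fderiv ℝ f z (Pi.single i 1, 0) * fderiv ℝ g z (0, Pi.single i 1)
      - fderiv ℝ f z (0, Pi.single i 1) * fderiv ℝ g z (Pi.single i 1, 0))

/-- The periodic three-particle Toda Hamiltonian. -/
noncomputable def todaH (a1 a2 a3 : ℝ) (z : (Fin 3 → ℝ) × (Fin 3 → ℝ)) : ℝ :=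
  (1 / 2) * ((z.1 0) ^ 2 + (z.1 1) ^ 2 + (z.1 2) ^ 2)
    + a1 * exp (z.2 0 - z.2 1) + a2 * exp (z.2 1 - z.2 2)
    + a3 * exp (z.2 2 - z.2 0)

/-- The Toda Lax matrix `L(λ,μ)`. -/
noncomputable def todaL (a1 a2 a3 lam mu : ℝ) (z : (Fin 3 → ℝ) × (Fin 3 → ℝ)) :
    Matrix (Fin 3) (Fin 3) ℝ :=
  !![lam - z.1 0, a1 * exp (z.2 0 - z.2 1), mu⁻¹;
     1, lam - z.1 1, a2 * exp (z.2 1 - z.2 2);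
     mu * a3 * exp (z.2 2 - z.2 0), 1, lam - z.1 2]

/-- The second Toda Lax matrix `L₋`. -/
noncomputable def todaLminus (a1 a2 a3 mu : ℝ) (z : (Fin 3 → ℝ) × (Fin 3 → ℝ)) :
    Matrix (Fin 3) (Fin 3) ℝ :=
  -(Matrix.single 0 1 (a1 * exp (z.2 0 - z.2 1))
    + Matrix.single 1 2 (a2 * exp (z.2 1 - z.2 2))
    + Matrix.single 2 0 (mu * a3 * exp (z.2 2 - z.2 0)))

/-- The transformed Hamiltonian `H̃ = e^{q₂−q₁}(H + b)` obtained by the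
canonical change of time associated to the simple root `β = ε₁ − ε₂`. -/
noncomputable def todaHt (a1 a2 a3 b : ℝ) (z : (Fin 3 → ℝ) × (Fin 3 → ℝ)) : ℝ :=
  exp (z.2 1 - z.2 0) * (todaH a1 a2 a3 z + b)

/-- The transformed Lax matrix `L̃ = L − (H̃/a₁)E₂₁`. -/
noncomputable def todaLt (a1 a2 a3 b lam mu : ℝ) (z : (Fin 3 → ℝ) × (Fin 3 → ℝ)) :
    Matrix (Fin 3) (Fin 3) ℝ :=
  todaL a1 a2 a3 lam mu z
    - Matrix.single 1 0 (todaHt a1 a2 a3 b z / a1)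

/-- The transformed second Lax matrix `L̃₋ = e^{q₂−q₁}·L₋`. -/
noncomputable def todaLtminus (a1 a2 a3 mu : ℝ) (z : (Fin 3 → ℝ) × (Fin 3 → ℝ)) :
    Matrix (Fin 3) (Fin 3) ℝ :=
  exp (z.2 1 - z.2 0) • todaLminus a1 a2 a3 mu z

set_option maxHeartbeats 2000000 in
/-- the transformed Lax equation `{H̃, L̃} = [L̃, L̃₋]` holds
entrywise at every point of phase space, for all `λ` and all `μ ≠ 0`. -/
theorem stmt_12 (a1 a2 a3 b lam mu : ℝ) (ha1 : a1 ≠ 0) (hmu : mu ≠ 0)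
    (z : (Fin 3 → ℝ) × (Fin 3 → ℝ)) (i j : Fin 3) :
    pbracket (todaHt a1 a2 a3 b) (fun w => todaLt a1 a2 a3 b lam mu w i j) z =
      (todaLt a1 a2 a3 b lam mu z * todaLtminus a1 a2 a3 mu z
        - todaLtminus a1 a2 a3 mu z * todaLt a1 a2 a3 b lam mu z) i j := by
  classical
  have hP : ∀ i : Fin 3, HasFDerivAt (fun w : (Fin 3 → ℝ) × (Fin 3 → ℝ) => w.1 i)
      ((ContinuousLinearMap.proj i).comp (ContinuousLinearMap.fst ℝ (Fin 3 → ℝ) (Fin 3 → ℝ))) z :=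
    fun i => by exact ((ContinuousLinearMap.proj i).comp (ContinuousLinearMap.fst ℝ (Fin 3 → ℝ) (Fin 3 → ℝ))).hasFDerivAt
  have hQ : ∀ i : Fin 3, HasFDerivAt (fun w : (Fin 3 → ℝ) × (Fin 3 → ℝ) => w.2 i)
      ((ContinuousLinearMap.proj i).comp (ContinuousLinearMap.snd ℝ (Fin 3 → ℝ) (Fin 3 → ℝ))) z :=
    fun i => by exact ((ContinuousLinearMap.proj i).comp (ContinuousLinearMap.snd ℝ (Fin 3 → ℝ) (Fin 3 → ℝ))).hasFDerivAt
  have hE : ∀ j k : Fin 3, HasFDerivAt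
      (fun w : (Fin 3 → ℝ) × (Fin 3 → ℝ) => exp (w.2 j - w.2 k))
      (exp (z.2 j - z.2 k) •
        ((ContinuousLinearMap.proj j).comp (ContinuousLinearMap.snd ℝ (Fin 3 → ℝ) (Fin 3 → ℝ))
          - (ContinuousLinearMap.proj k).comp (ContinuousLinearMap.snd ℝ (Fin 3 → ℝ) (Fin 3 → ℝ)))) z :=
    fun j k => ((hQ j).sub (hQ k)).exp
  have hpow : ∀ i : Fin 3, HasFDerivAt (fun w : (Fin 3 → ℝ) × (Fin 3 → ℝ) => (w.1 i) ^ 2)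
      (((2 : ℕ) * (z.1 i) ^ 1) •
        ((ContinuousLinearMap.proj i).comp (ContinuousLinearMap.fst ℝ (Fin 3 → ℝ) (Fin 3 → ℝ)))) z :=
    fun i => by
      have := (hasDerivAt_pow 2 (z.1 i)).comp_hasFDerivAt z (hP i)
      simp at this
      simp only [Nat.cast_ofNat, pow_one]
      exact this
  have hH := (((((hpow 0).add (hpow 1)).add (hpow 2)).const_mul (1/2 : ℝ)).add
      ((hE 0 1).const_mul a1)).add ((hE 1 2).const_mul a2) |>.add ((hE 2 0).const_mul a3)
  have hH' : HasFDerivAt (todaH a1 a2 a3) _ z := hH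
  have hHt := (hE 1 0).mul (hH'.add_const b)
  have hHt' : HasFDerivAt (todaHt a1 a2 a3 b) _ z := hHt
  have key : exp (z.2 1 - z.2 0) * exp (z.2 0 - z.2 1) = 1 := by
    rw [← Real.exp_add]; norm_num
  fin_cases i <;> fin_cases j <;>
    simp only [pbracket, Fin.sum_univ_three, Fin.zero_eta, Fin.mk_one, Fin.reduceFinMk, Fin.isValue]
  · -- (0,0)
    have hf : HasFDerivAt (fun w => todaLt a1 a2 a3 b lam mu w 0 0) _ z :=
      ((hasFDerivAt_const lam z).sub (hP 0)).sub_const 0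
    rw [hHt'.fderiv, hf.fderiv]
    simp only [ContinuousLinearMap.add_apply, ContinuousLinearMap.smul_apply,
      ContinuousLinearMap.sub_apply, ContinuousLinearMap.comp_apply,
      ContinuousLinearMap.coe_fst', ContinuousLinearMap.coe_snd',
      ContinuousLinearMap.proj_apply, ContinuousLinearMap.zero_apply,
      ContinuousLinearMap.neg_apply, smul_eq_mul, Pi.single_apply, Pi.zero_apply]
    norm_num
    simp [todaLt, todaLtminus, todaLminus, todaL, todaHt, todaH, Matrix.mul_apply,
      Fin.sum_univ_three, Matrix.sub_apply, Matrix.smul_apply, Matrix.single_apply_same, Matrix.single_apply_of_ne,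
      Matrix.cons_val', Matrix.cons_val_zero, Matrix.cons_val_one, Matrix.head_cons,
      Matrix.empty_val', Matrix.cons_val_fin_one, smul_eq_mul, Real.exp_sub]
    field_simp
    ring

  · -- (0,1)
    have hf : HasFDerivAt (fun w => todaLt a1 a2 a3 b lam mu w 0 1) _ z :=
      ((hE 0 1).const_mul a1).sub_const 0
    rw [hHt'.fderiv, hf.fderiv]
    simp only [ContinuousLinearMap.add_apply, ContinuousLinearMap.smul_apply,
      ContinuousLinearMap.sub_apply, ContinuousLinearMap.comp_apply,
      ContinuousLinearMap.coe_fst', ContinuousLinearMap.coe_snd',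
      ContinuousLinearMap.proj_apply, ContinuousLinearMap.zero_apply,
      ContinuousLinearMap.neg_apply, smul_eq_mul, Pi.single_apply, Pi.zero_apply]
    norm_num
    simp [todaLt, todaLtminus, todaLminus, todaL, todaHt, todaH, Matrix.mul_apply,
      Fin.sum_univ_three, Matrix.sub_apply, Matrix.smul_apply, Matrix.single_apply_same, Matrix.single_apply_of_ne,
      Matrix.cons_val', Matrix.cons_val_zero, Matrix.cons_val_one, Matrix.head_cons,
      Matrix.empty_val', Matrix.cons_val_fin_one, smul_eq_mul, Real.exp_sub]
    field_simp
    ring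

  · -- (0,2)
    have hf : HasFDerivAt (fun w => todaLt a1 a2 a3 b lam mu w 0 2)
        (0 : ((Fin 3 → ℝ) × (Fin 3 → ℝ)) →L[ℝ] ℝ) z :=
      (hasFDerivAt_const (mu⁻¹ : ℝ) z).sub_const (0:ℝ)
    rw [hHt'.fderiv, hf.fderiv]
    simp only [ContinuousLinearMap.add_apply, ContinuousLinearMap.smul_apply,
      ContinuousLinearMap.sub_apply, ContinuousLinearMap.comp_apply,
      ContinuousLinearMap.coe_fst', ContinuousLinearMap.coe_snd',
      ContinuousLinearMap.proj_apply, ContinuousLinearMap.zero_apply,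
      ContinuousLinearMap.neg_apply, smul_eq_mul, Pi.single_apply, Pi.zero_apply]
    norm_num
    simp [todaLt, todaLtminus, todaLminus, todaL, todaHt, todaH, Matrix.mul_apply,
      Fin.sum_univ_three, Matrix.sub_apply, Matrix.smul_apply, Matrix.single_apply_same, Matrix.single_apply_of_ne,
      Matrix.cons_val', Matrix.cons_val_zero, Matrix.cons_val_one, Matrix.head_cons,
      Matrix.empty_val', Matrix.cons_val_fin_one, smul_eq_mul, Real.exp_sub]
    field_simp
    ring

  · -- (1,0)
    have hf : HasFDerivAt (fun w => todaLt a1 a2 a3 b lam mu w 1 0) _ z :=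
      (hasFDerivAt_const (1:ℝ) z).sub (((hasDerivAt_id (todaHt a1 a2 a3 b z)).div_const a1).comp_hasFDerivAt z hHt')
    rw [hHt'.fderiv, hf.fderiv]
    simp only [ContinuousLinearMap.add_apply, ContinuousLinearMap.smul_apply,
      ContinuousLinearMap.sub_apply, ContinuousLinearMap.comp_apply,
      ContinuousLinearMap.coe_fst', ContinuousLinearMap.coe_snd',
      ContinuousLinearMap.proj_apply, ContinuousLinearMap.zero_apply,
      ContinuousLinearMap.neg_apply, smul_eq_mul, Pi.single_apply, Pi.zero_apply]
    norm_num
    simp [todaLt, todaLtminus, todaLminus, todaL, todaHt, todaH, Matrix.mul_apply,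
      Fin.sum_univ_three, Matrix.sub_apply, Matrix.smul_apply, Matrix.single_apply_same, Matrix.single_apply_of_ne,
      Matrix.cons_val', Matrix.cons_val_zero, Matrix.cons_val_one, Matrix.head_cons,
      Matrix.empty_val', Matrix.cons_val_fin_one, smul_eq_mul, Real.exp_sub]
    field_simp
    ring

  · -- (1,1)
    have hf : HasFDerivAt (fun w => todaLt a1 a2 a3 b lam mu w 1 1) _ z :=
      ((hasFDerivAt_const lam z).sub (hP 1)).sub_const 0
    rw [hHt'.fderiv, hf.fderiv]
    simp only [ContinuousLinearMap.add_apply, ContinuousLinearMap.smul_apply,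
      ContinuousLinearMap.sub_apply, ContinuousLinearMap.comp_apply,
      ContinuousLinearMap.coe_fst', ContinuousLinearMap.coe_snd',
      ContinuousLinearMap.proj_apply, ContinuousLinearMap.zero_apply,
      ContinuousLinearMap.neg_apply, smul_eq_mul, Pi.single_apply, Pi.zero_apply]
    norm_num
    simp [todaLt, todaLtminus, todaLminus, todaL, todaHt, todaH, Matrix.mul_apply,
      Fin.sum_univ_three, Matrix.sub_apply, Matrix.smul_apply, Matrix.single_apply_same, Matrix.single_apply_of_ne,
      Matrix.cons_val', Matrix.cons_val_zero, Matrix.cons_val_one, Matrix.head_cons,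
      Matrix.empty_val', Matrix.cons_val_fin_one, smul_eq_mul, Real.exp_sub]
    field_simp
    ring

  · -- (1,2)
    have hf : HasFDerivAt (fun w => todaLt a1 a2 a3 b lam mu w 1 2) _ z :=
      ((hE 1 2).const_mul a2).sub_const 0
    rw [hHt'.fderiv, hf.fderiv]
    simp only [ContinuousLinearMap.add_apply, ContinuousLinearMap.smul_apply,
      ContinuousLinearMap.sub_apply, ContinuousLinearMap.comp_apply,
      ContinuousLinearMap.coe_fst', ContinuousLinearMap.coe_snd',
      ContinuousLinearMap.proj_apply, ContinuousLinearMap.zero_apply,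
      ContinuousLinearMap.neg_apply, smul_eq_mul, Pi.single_apply, Pi.zero_apply]
    norm_num
    simp [todaLt, todaLtminus, todaLminus, todaL, todaHt, todaH, Matrix.mul_apply,
      Fin.sum_univ_three, Matrix.sub_apply, Matrix.smul_apply, Matrix.single_apply_same, Matrix.single_apply_of_ne,
      Matrix.cons_val', Matrix.cons_val_zero, Matrix.cons_val_one, Matrix.head_cons,
      Matrix.empty_val', Matrix.cons_val_fin_one, smul_eq_mul, Real.exp_sub]
    field_simp
    ring

  · -- (2,0)
    have hf : HasFDerivAt (fun w => todaLt a1 a2 a3 b lam mu w 2 0) _ z :=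
      ((hE 2 0).const_mul (mu * a3)).sub_const 0
    rw [hHt'.fderiv, hf.fderiv]
    simp only [ContinuousLinearMap.add_apply, ContinuousLinearMap.smul_apply,
      ContinuousLinearMap.sub_apply, ContinuousLinearMap.comp_apply,
      ContinuousLinearMap.coe_fst', ContinuousLinearMap.coe_snd',
      ContinuousLinearMap.proj_apply, ContinuousLinearMap.zero_apply,
      ContinuousLinearMap.neg_apply, smul_eq_mul, Pi.single_apply, Pi.zero_apply]
    norm_num
    simp [todaLt, todaLtminus, todaLminus, todaL, todaHt, todaH, Matrix.mul_apply,
      Fin.sum_univ_three, Matrix.sub_apply, Matrix.smul_apply, Matrix.single_apply_same, Matrix.single_apply_of_ne,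
      Matrix.cons_val', Matrix.cons_val_zero, Matrix.cons_val_one, Matrix.head_cons,
      Matrix.empty_val', Matrix.cons_val_fin_one, smul_eq_mul, Real.exp_sub]
    field_simp
    ring

  · -- (2,1)
    have hf : HasFDerivAt (fun w => todaLt a1 a2 a3 b lam mu w 2 1)
        (0 : ((Fin 3 → ℝ) × (Fin 3 → ℝ)) →L[ℝ] ℝ) z :=
      (hasFDerivAt_const (1 : ℝ) z).sub_const (0:ℝ)
    rw [hHt'.fderiv, hf.fderiv]
    simp only [ContinuousLinearMap.add_apply, ContinuousLinearMap.smul_apply,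
      ContinuousLinearMap.sub_apply, ContinuousLinearMap.comp_apply,
      ContinuousLinearMap.coe_fst', ContinuousLinearMap.coe_snd',
      ContinuousLinearMap.proj_apply, ContinuousLinearMap.zero_apply,
      ContinuousLinearMap.neg_apply, smul_eq_mul, Pi.single_apply, Pi.zero_apply]
    norm_num
    simp [todaLt, todaLtminus, todaLminus, todaL, todaHt, todaH, Matrix.mul_apply,
      Fin.sum_univ_three, Matrix.sub_apply, Matrix.smul_apply, Matrix.single_apply_same, Matrix.single_apply_of_ne,
      Matrix.cons_val', Matrix.cons_val_zero, Matrix.cons_val_one, Matrix.head_cons,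
      Matrix.empty_val', Matrix.cons_val_fin_one, smul_eq_mul, Real.exp_sub]
    field_simp
    ring

  · -- (2,2)
    have hf : HasFDerivAt (fun w => todaLt a1 a2 a3 b lam mu w 2 2) _ z :=
      ((hasFDerivAt_const lam z).sub (hP 2)).sub_const 0
    rw [hHt'.fderiv, hf.fderiv]
    simp only [ContinuousLinearMap.add_apply, ContinuousLinearMap.smul_apply,
      ContinuousLinearMap.sub_apply, ContinuousLinearMap.comp_apply,
      ContinuousLinearMap.coe_fst', ContinuousLinearMap.coe_snd',
      ContinuousLinearMap.proj_apply, ContinuousLinearMap.zero_apply,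
      ContinuousLinearMap.neg_apply, smul_eq_mul, Pi.single_apply, Pi.zero_apply]
    norm_num
    simp [todaLt, todaLtminus, todaLminus, todaL, todaHt, todaH, Matrix.mul_apply,
      Fin.sum_univ_three, Matrix.sub_apply, Matrix.smul_apply, Matrix.single_apply_same, Matrix.single_apply_of_ne,
      Matrix.cons_val', Matrix.cons_val_zero, Matrix.cons_val_one, Matrix.head_cons,
      Matrix.empty_val', Matrix.cons_val_fin_one, smul_eq_mul, Real.exp_sub]
    field_simp
end

section
/- Assume a_1 ≠ 0 and b ∈ ℝ, and consider on ℝ³ × ℝ³ the periodic three-particle Toda Hamiltonian H = ½(p_1²+p_2²+p_3²) + a_1e^{q_1−q_2} + a_2e^{q_2−q_3} + a_3e^{q_3−q_1}. Define the three functions P = p_1 + p_2 + p_3, H̃ = e^{q_2−q_1}(H + b), and K̃ = −p_1p_2p_3 + a_1e^{q_1−q_2}p_3 + a_2e^{q_2−q_3}p_1 + a_3e^{q_3−q_1}p_2 − (H+b)p_3. Then P, H̃ and K̃ are pairwise in involution with respect to the canonical Poisson bracket: {P, H̃} = {P, K̃} = {H̃, K̃} = 0 at every point of ℝ³ × ℝ³.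 (These are the integrals of motion of the integrable system obtained from the Toda lattice by the canonical change of time dt̃ = e^{q_1−q_2}dt.) -/
open Real

set_option maxHeartbeats 4000000

/-- the total momentum `P = p₁+p₂+p₃`, the transformed
Hamiltonian `H̃ = e^{q₂−q₁}(H+b)`, and
`K̃ = −p₁p₂p₃ + a₁e^{q₁−q₂}p₃ + a₂e^{q₂−q₃}p₁ + a₃e^{q₃−q₁}p₂ − (H+b)p₃`
are pairwise in involution on all of phase space. -/
theorem stmt_19 (a1 a2 a3 b : ℝ) (ha1 : a1 ≠ 0)
    (P Ht Kt : (Fin 3 → ℝ) × (Fin 3 → ℝ) → ℝ)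
    (hP : ∀ z, P z = z.1 0 + z.1 1 + z.1 2)
    (hHt : ∀ z, Ht z = exp (z.2 1 - z.2 0) * (todaH a1 a2 a3 z + b))
    (hKt : ∀ z, Kt z =
      -(z.1 0 * z.1 1 * z.1 2)
        + a1 * exp (z.2 0 - z.2 1) * z.1 2
        + a2 * exp (z.2 1 - z.2 2) * z.1 0
        + a3 * exp (z.2 2 - z.2 0) * z.1 1
        - (todaH a1 a2 a3 z + b) * z.1 2) :
    ∀ z : (Fin 3 → ℝ) × (Fin 3 → ℝ),
      pbracket P Ht z = 0 ∧ pbracket P Kt z = 0 ∧ pbracket Ht Kt z = 0 := by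
  intro z
  obtain rfl : P = fun z => z.1 0 + z.1 1 + z.1 2 := funext hP
  obtain rfl : Ht = fun z => exp (z.2 1 - z.2 0) * (todaH a1 a2 a3 z + b) := funext hHt
  obtain rfl : Kt = fun z =>
      -(z.1 0 * z.1 1 * z.1 2)
        + a1 * exp (z.2 0 - z.2 1) * z.1 2
        + a2 * exp (z.2 1 - z.2 2) * z.1 0
        + a3 * exp (z.2 2 - z.2 0) * z.1 1
        - (todaH a1 a2 a3 z + b) * z.1 2 := funext hKt
  have hp : ∀ i : Fin 3, HasFDerivAt (fun w : (Fin 3 → ℝ) × (Fin 3 → ℝ) => w.1 i)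
      ((ContinuousLinearMap.proj i).comp (ContinuousLinearMap.fst ℝ (Fin 3 → ℝ) (Fin 3 → ℝ))) z :=
    fun i => ((ContinuousLinearMap.proj i).comp
      (ContinuousLinearMap.fst ℝ (Fin 3 → ℝ) (Fin 3 → ℝ))).hasFDerivAt
  have hq : ∀ i : Fin 3, HasFDerivAt (fun w : (Fin 3 → ℝ) × (Fin 3 → ℝ) => w.2 i)
      ((ContinuousLinearMap.proj i).comp (ContinuousLinearMap.snd ℝ (Fin 3 → ℝ) (Fin 3 → ℝ))) z :=
    fun i => ((ContinuousLinearMap.proj i).comp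
      (ContinuousLinearMap.snd ℝ (Fin 3 → ℝ) (Fin 3 → ℝ))).hasFDerivAt
  have sq : ∀ i : Fin 3, HasFDerivAt (fun w : (Fin 3 → ℝ) × (Fin 3 → ℝ) => w.1 i ^ 2)
      (((2:ℕ) * z.1 i ^ 1) • ((ContinuousLinearMap.proj i).comp
        (ContinuousLinearMap.fst ℝ (Fin 3 → ℝ) (Fin 3 → ℝ)))) z :=
    fun i => by have := (hasDerivAt_pow 2 (z.1 i)).comp_hasFDerivAt z (hp i); exact this
  have hHbody := (((((sq 0).add (sq 1)).add (sq 2)).const_mul ((1:ℝ)/2)).add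
      (((hq 0).sub (hq 1)).exp.const_mul a1)).add (((hq 1).sub (hq 2)).exp.const_mul a2) |>.add
      (((hq 2).sub (hq 0)).exp.const_mul a3)
  have hH : HasFDerivAt (todaH a1 a2 a3) _ z := hHbody
  have hP' := ((hp 0).add (hp 1)).add (hp 2)
  have hHt' := ((hq 1).sub (hq 0)).exp.mul (hH.add_const b)
  have hKt' := (((((((hp 0).mul (hp 1)).mul (hp 2)).neg).add
      ((((hq 0).sub (hq 1)).exp.const_mul a1).mul (hp 2))).add
      ((((hq 1).sub (hq 2)).exp.const_mul a2).mul (hp 0))).add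
      ((((hq 2).sub (hq 0)).exp.const_mul a3).mul (hp 1))).sub
      ((hH.add_const b).mul (hp 2))
  have e0 := Real.exp_ne_zero (z.2 0)
  have e1 := Real.exp_ne_zero (z.2 1)
  have e2 := Real.exp_ne_zero (z.2 2)
  refine ⟨?_, ?_, ?_⟩
  · unfold pbracket
    erw [hP'.fderiv, hHt'.fderiv]
    simp only [Fin.sum_univ_three, ContinuousLinearMap.add_apply, ContinuousLinearMap.smul_apply,
      ContinuousLinearMap.sub_apply, ContinuousLinearMap.coe_comp', Function.comp_apply,
      ContinuousLinearMap.proj_apply, ContinuousLinearMap.coe_fst', ContinuousLinearMap.coe_snd',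
      smul_eq_mul, Pi.single_apply, Fin.isValue,
      show ((0:Fin 3)=1)=False by decide, show ((0:Fin 3)=2)=False by decide,
      show ((1:Fin 3)=0)=False by decide, show ((1:Fin 3)=2)=False by decide,
      show ((2:Fin 3)=0)=False by decide, show ((2:Fin 3)=1)=False by decide,
      if_true, if_false, ite_true, ite_false, eq_self_iff_true,
      mul_zero, zero_mul, mul_one, one_mul, add_zero, zero_add, sub_zero, zero_sub, Pi.zero_apply]
    simp only [todaH, Real.exp_sub]
    field_simp
    ring
  · unfold pbracket
    erw [hP'.fderiv, hKt'.fderiv]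
    simp only [Fin.sum_univ_three, ContinuousLinearMap.add_apply, ContinuousLinearMap.smul_apply,
      ContinuousLinearMap.sub_apply, ContinuousLinearMap.coe_comp', Function.comp_apply,
      ContinuousLinearMap.proj_apply, ContinuousLinearMap.coe_fst', ContinuousLinearMap.coe_snd',
      ContinuousLinearMap.neg_apply, smul_eq_mul, Pi.single_apply, Fin.isValue,
      show ((0:Fin 3)=1)=False by decide, show ((0:Fin 3)=2)=False by decide,
      show ((1:Fin 3)=0)=False by decide, show ((1:Fin 3)=2)=False by decide,
      show ((2:Fin 3)=0)=False by decide, show ((2:Fin 3)=1)=False by decide,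
      if_true, if_false, ite_true, ite_false, eq_self_iff_true,
      mul_zero, zero_mul, mul_one, one_mul, add_zero, zero_add, sub_zero, zero_sub, Pi.zero_apply]
    simp only [todaH, Real.exp_sub, Pi.add_apply, Pi.sub_apply, Pi.mul_apply, Pi.neg_apply]
    field_simp
    ring
  · unfold pbracket
    erw [hHt'.fderiv, hKt'.fderiv]
    simp only [Fin.sum_univ_three, ContinuousLinearMap.add_apply, ContinuousLinearMap.smul_apply,
      ContinuousLinearMap.sub_apply, ContinuousLinearMap.coe_comp', Function.comp_apply,
      ContinuousLinearMap.proj_apply, ContinuousLinearMap.coe_fst', ContinuousLinearMap.coe_snd',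
      ContinuousLinearMap.neg_apply, smul_eq_mul, Pi.single_apply, Fin.isValue,
      show ((0:Fin 3)=1)=False by decide, show ((0:Fin 3)=2)=False by decide,
      show ((1:Fin 3)=0)=False by decide, show ((1:Fin 3)=2)=False by decide,
      show ((2:Fin 3)=0)=False by decide, show ((2:Fin 3)=1)=False by decide,
      if_true, if_false, ite_true, ite_false, eq_self_iff_true,
      mul_zero, zero_mul, mul_one, one_mul, add_zero, zero_add, sub_zero, zero_sub, Pi.zero_apply]
    simp only [todaH, Real.exp_sub, Pi.add_apply, Pi.sub_apply, Pi.mul_apply, Pi.neg_apply]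
    field_simp
    ring
end
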